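/- Let $n \geq 1$, let $A = (a_{ij})$ be an $n \times n$ matrix over a commutative ring, let $x, y$ be vectors of length $n$, and let $z$ be a scalar. Then $z^{n-1} \det \begin{pmatrix} A & x \\ y^T & z \end{pmatrix} = \det\big( (z a_{ij} - x_i y_j)_{1 \le i,j \le n} \big)$. -/

import Mathlib

open Matrix Polynomial

/-- The key identity without cancellation: `z^n * det [A x; yᵀ z] = z * det (z•A - x⬝y)`. -/
lemma aux_zn {R : Type*} [CommRing R] (n : ℕ)
    (A : Matrix (Fin n) (Fin n) R) (x y : Fin n → R) (z : R) :
    z ^ n *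
      (Matrix.fromBlocks A (Matrix.replicateCol (Fin 1) x) (Matrix.replicateRow (Fin 1) y)
        (Matrix.of fun _ _ => z)).det
      = z * (Matrix.of fun i j : Fin n => z * A i j - x i * y j).det := by
  have hM : (Matrix.fromBlocks A (Matrix.replicateCol (Fin 1) x) (Matrix.replicateRow (Fin 1) y)
        (Matrix.of fun _ _ => z)) *
      (Matrix.fromBlocks (z • (1 : Matrix (Fin n) (Fin n) R)) 0
        (-(Matrix.replicateRow (Fin 1) y)) 1) =
      Matrix.fromBlocks (Matrix.of fun i j : Fin n => z * A i j - x i * y j)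
        (Matrix.replicateCol (Fin 1) x) 0 (Matrix.of fun _ _ => z) := by
    rw [Matrix.fromBlocks_multiply]
    ext i j
    rcases i with i | i <;> rcases j with j | j <;>
      simp [Matrix.mul_apply, Fin.sum_univ_succ, mul_comm, sub_eq_add_neg]
  have h := congrArg Matrix.det hM
  rw [Matrix.det_mul, Matrix.det_fromBlocks_zero₁₂, Matrix.det_fromBlocks_zero₂₁] at h
  simp only [Matrix.det_smul, Matrix.det_one, Matrix.det_unique, Matrix.one_apply_eq,
    smul_eq_mul, mul_one, Matrix.of_apply, Fintype.card_fin] at h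
  linear_combination h

theorem stmt_0 {R : Type*} [CommRing R] (n : ℕ) (hn : 1 ≤ n)
    (A : Matrix (Fin n) (Fin n) R) (x y : Fin n → R) (z : R) :
    z ^ (n - 1) *
      (Matrix.fromBlocks A (Matrix.replicateCol (Fin 1) x) (Matrix.replicateRow (Fin 1) y)
        (Matrix.of fun _ _ => z)).det
      = (Matrix.of fun i j : Fin n => z * A i j - x i * y j).det := by
  -- work in R[X] with z replaced by X, cancel X, then evaluate at z
  have key := aux_zn n (A.map Polynomial.C) (fun i => Polynomial.C (x i))
      (fun i => Polynomial.C (y i)) (Polynomial.X : R[X])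
  have hn' : (X : R[X]) ^ n = X ^ (n - 1) * X := by
    rw [← pow_succ, Nat.sub_add_cancel hn]
  rw [hn'] at key
  have hcancel : (X : R[X]) ^ (n - 1) *
      (Matrix.fromBlocks (A.map Polynomial.C)
        (Matrix.replicateCol (Fin 1) (fun i => Polynomial.C (x i)))
        (Matrix.replicateRow (Fin 1) (fun i => Polynomial.C (y i)))
        (Matrix.of fun _ _ => (X : R[X]))).det
      = (Matrix.of fun i j : Fin n =>
          (X : R[X]) * (A.map Polynomial.C) i j - Polynomial.C (x i) * Polynomial.C (y j)).det := by
    refine Polynomial.isRegular_X.left ?_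
    show (X : R[X]) * _ = (X : R[X]) * _
    rw [← mul_assoc, mul_comm (X : R[X]) ((X : R[X]) ^ (n - 1)), key]
  have heval := congrArg (Polynomial.evalRingHom z) hcancel
  rw [_root_.map_mul, map_pow, RingHom.map_det, RingHom.map_det] at heval
  have h1 : (Polynomial.evalRingHom z).mapMatrix
      (Matrix.fromBlocks (A.map Polynomial.C)
        (Matrix.replicateCol (Fin 1) (fun i => Polynomial.C (x i)))
        (Matrix.replicateRow (Fin 1) (fun i => Polynomial.C (y i)))
        (Matrix.of fun _ _ => (X : R[X])))
      = Matrix.fromBlocks A (Matrix.replicateCol (Fin 1) x) (Matrix.replicateRow (Fin 1) y)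
        (Matrix.of fun _ _ => z) := by
    ext i j
    rcases i with i | i <;> rcases j with j | j <;>
      simp [RingHom.mapMatrix_apply, Matrix.map_apply]
  have h2 : (Polynomial.evalRingHom z).mapMatrix
      (Matrix.of fun i j : Fin n =>
          (X : R[X]) * (A.map Polynomial.C) i j - Polynomial.C (x i) * Polynomial.C (y j))
      = Matrix.of fun i j : Fin n => z * A i j - x i * y j := by
    ext i j
    simp [RingHom.mapMatrix_apply, Matrix.map_apply]
    ring
  rw [h1, h2] at heval
  simpa using heval
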